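/- arXiv:2205.14097 — 3 statements merged into one kernel-verified Lean document; each statement's English description precedes it below -/
import Mathlib

section
/- Every group structure on the set ℚ of rational numbers that is compatible with the metric d(x,y) = |x − y| is isomorphic as a group to the additive group (ℚ,+); in particular, the metric space (ℚ, |x−y|) is a natural metric space. -/
/-- A group structure `s` on a metric space `X` is compatible with the metric: all left
translations, right translations, and the inversion are isometries. -/
def Compatible (X : Type*) [MetricSpace X] (s : Group X) : Prop :=
  (∀ g x y : X, dist (s.mul g x) (s.mul g y) = dist x y) ∧
  (∀ g x y : X, dist (s.mul x g) (s.mul y g) = dist x y) ∧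
  (∀ x y : X, dist (s.inv x) (s.inv y) = dist x y)

/-- Two group structures are isomorphic as groups. -/
def GroupStructIso {X Y : Type*} (s : Group X) (t : Group Y) : Prop :=
  ∃ f : X ≃ Y, ∀ a b : X, f (s.mul a b) = t.mul (f a) (f b)

/-- A metric space is natural: there is a compatible group structure, and any two compatible
group structures are isomorphic as groups. -/
def NaturalSpace (X : Type*) [MetricSpace X] : Prop :=
  (∃ s : Group X, Compatible X s) ∧
  ∀ s t : Group X, Compatible X s → Compatible X t → GroupStructIso s t

lemma sq_of_abs_eq {a b : ℚ} (h : |a| = |b|) : a ^ 2 = b ^ 2 := by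
  rw [← sq_abs a, ← sq_abs b, h]

/-- Any isometry of ℚ is `x ↦ x + c` or `x ↦ -x + c`. -/
lemma isom_affine (f : ℚ → ℚ) (hf : ∀ x y, dist (f x) (f y) = dist x y) :
    (∀ x, f x = x + f 0) ∨ (∀ x, f x = -x + f 0) := by
  have key : ∀ x y, (f x - f y)^2 = (x - y)^2 := by
    intro x y
    have h := hf x y
    rw [Rat.dist_eq, Rat.dist_eq] at h
    have h' : |f x - f y| = |x - y| := by exact_mod_cast h
    exact sq_of_abs_eq h'
  have h1 : f 1 = f 0 + 1 ∨ f 1 = f 0 - 1 := by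
    have h := key 1 0
    have : (f 1 - f 0 - 1) * (f 1 - f 0 + 1) = 0 := by nlinarith
    rcases mul_eq_zero.1 this with h' | h'
    · left; linarith
    · right; linarith
  rcases h1 with h | h
  · left; intro x
    have k0 := key x 0
    have k1 := key x 1
    rw [h] at k1
    linear_combination (k0 - k1) / 2
  · right; intro x
    have k0 := key x 0
    have k1 := key x 1
    rw [h] at k1
    linear_combination (k1 - k0) / 2

/-- Every compatible group structure on ℚ is isomorphic to `(ℚ, +)`. -/
lemma rat_key (s : Group ℚ) (hs : Compatible ℚ s) :
    ∃ f : ℚ ≃ ℚ, ∀ a b : ℚ, f (s.mul a b) = f a + f b := by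
  obtain ⟨hl, hr, _⟩ := hs
  have mul_one' : ∀ g : ℚ, s.mul g s.one = g := s.mul_one
  have one_mul' : ∀ g : ℚ, s.mul s.one g = g := s.one_mul
  -- every left translation is of the form x ↦ x + c
  have hmul : ∀ g x : ℚ, s.mul g x = x + g - s.one := by
    intro g x
    rcases isom_affine (fun x => s.mul g x) (fun x y => hl g x y) with hc | hc
    · have he := hc s.one
      rw [mul_one'] at he
      have := hc x
      linarith
    · -- reflection case is impossible: dist (g*x) x would be |c - 2x|, not constant
      exfalso
      set c := s.mul g 0 with hcdef
      have hx : ∀ x : ℚ, ((-x + c) - x) ^ 2 = (g - s.one) ^ 2 := by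
        intro x
        have h := hr x g s.one
        rw [one_mul', Rat.dist_eq, Rat.dist_eq] at h
        have h2 : |s.mul g x - x| = |g - s.one| := by exact_mod_cast h
        rw [hc x] at h2
        exact sq_of_abs_eq h2
      have q0 := hx 0
      have q1 := hx 1
      have q2 := hx (-1)
      nlinarith
  refine ⟨Equiv.subRight s.one, fun a b => ?_⟩
  simp only [Equiv.subRight_apply, hmul]
  ring

/-- Every group structure on ℚ compatible with the metric d(x,y) = |x − y| is isomorphic to
the additive group (ℚ,+); in particular (ℚ, |x−y|) is a natural metric space. -/
theorem rat_natural :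
    (∀ s : Group ℚ, Compatible ℚ s →
      ∃ f : ℚ ≃ ℚ, ∀ a b : ℚ, f (s.mul a b) = f a + f b) ∧
    NaturalSpace ℚ := by
  refine ⟨rat_key, ?_, ?_⟩
  · -- existence: the additive group structure, written multiplicatively
    refine ⟨{ mul := (· + ·), one := 0, inv := (- ·), div := fun a b => a + -b,
              div_eq_mul_inv := fun _ _ => rfl,
              npow := fun n x => (n : ℚ) * x,
              npow_zero := fun x => by show ((0:ℕ):ℚ) * x = 0; simp,
              npow_succ := fun n x => by show ((n+1:ℕ):ℚ) * x = (n:ℚ) * x + x; push_cast; ring,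
              zpow := fun n x => (n : ℚ) * x,
              zpow_zero' := fun x => by show ((0:ℤ):ℚ) * x = 0; simp,
              zpow_succ' := fun n x => by show (((n.succ:ℕ):ℤ):ℚ) * x = (((n:ℕ):ℤ):ℚ) * x + x; push_cast; ring,
              zpow_neg' := fun n x => by show ((Int.negSucc n:ℤ):ℚ) * x = -((((n.succ:ℕ):ℤ):ℚ) * x); rw [Int.cast_negSucc]; push_cast; ring,
              mul_assoc := add_assoc, one_mul := zero_add, mul_one := add_zero,
              inv_mul_cancel := neg_add_cancel }, ?_, ?_, ?_⟩
    · intro g x y; exact dist_add_left g x y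
    · intro g x y; exact dist_add_right x y g
    · intro x y; exact dist_neg_neg x y
  · intro s t hs ht
    obtain ⟨fs, hfs⟩ := rat_key s hs
    obtain ⟨ft, hft⟩ := rat_key t ht
    refine ⟨fs.trans ft.symm, fun a b => ?_⟩
    simp only [Equiv.trans_apply]
    rw [hfs a b, Equiv.symm_apply_eq, hft, ft.apply_symm_apply, ft.apply_symm_apply]
end

section
/- For every natural number n, every group structure on Euclidean space ℝⁿ that is compatible with the Euclidean metric d(x,y) = ‖x − y‖ is isomorphic as a group to the additive group (ℝⁿ,+); in particular, Euclidean space (ℝⁿ, ‖x−y‖) is a natural metric space. -/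
noncomputable def euclideanAddGroupStruct (n : ℕ) : Group (EuclideanSpace ℝ (Fin n)) where
  mul := (· + ·)
  one := 0
  inv := fun x => -x
  mul_assoc := add_assoc
  one_mul := zero_add
  mul_one := add_zero
  inv_mul_cancel := neg_add_cancel

lemma compatible_mul_eq {n : ℕ} (s : Group (EuclideanSpace ℝ (Fin n)))
    (hs : Compatible (EuclideanSpace ℝ (Fin n)) s) :
    ∀ a b, s.mul a b = a + b - s.one := by
  letI : Group (EuclideanSpace ℝ (Fin n)) := s
  obtain ⟨hl0, hr0, -⟩ := hs
  have hl : ∀ g x y : EuclideanSpace ℝ (Fin n), dist (g * x) (g * y) = dist x y :=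
    fun g x y => hl0 g x y
  have hr : ∀ g x y : EuclideanSpace ℝ (Fin n), dist (x * g) (y * g) = dist x y :=
    fun g x y => hr0 g x y
  show ∀ a b : EuclideanSpace ℝ (Fin n), a * b = a + b - 1
  set e : EuclideanSpace ℝ (Fin n) := 1 with he
  -- left translations, normalized to fix 0, are linear isometries (Mazur–Ulam)
  have hL : ∀ a : EuclideanSpace ℝ (Fin n),
      ∃ L : EuclideanSpace ℝ (Fin n) ≃ₗᵢ[ℝ] EuclideanSpace ℝ (Fin n),
        ∀ y, L y = a * (y + e) - a := by
    intro a
    let K : EuclideanSpace ℝ (Fin n) ≃ᵢ EuclideanSpace ℝ (Fin n) :=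
      { toFun := fun x => a * (x + e) - a
        invFun := fun x => a⁻¹ * (x + a) - e
        left_inv := fun x => by simp [inv_mul_cancel_left]
        right_inv := fun x => by simp [mul_inv_cancel_left]
        isometry_toFun := Isometry.of_dist_eq fun x y => by
          show dist (a * (x + e) - a) (a * (y + e) - a) = dist x y
          rw [dist_sub_right, hl, dist_add_right] }
    have hK0 : K 0 = 0 := by
      show a * (0 + e) - a = 0
      simp [he]
    refine ⟨K.toRealLinearIsometryEquivOfMapZero hK0, fun y => ?_⟩
    rw [IsometryEquiv.coe_toRealLinearIsometryEquivOfMapZero]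
    rfl
  -- right translations likewise
  have hR : ∀ b : EuclideanSpace ℝ (Fin n),
      ∃ L : EuclideanSpace ℝ (Fin n) ≃ₗᵢ[ℝ] EuclideanSpace ℝ (Fin n),
        ∀ x, L x = (x + e) * b - b := by
    intro b
    let K : EuclideanSpace ℝ (Fin n) ≃ᵢ EuclideanSpace ℝ (Fin n) :=
      { toFun := fun x => (x + e) * b - b
        invFun := fun x => (x + b) * b⁻¹ - e
        left_inv := fun x => by simp [mul_inv_cancel_right]
        right_inv := fun x => by simp [inv_mul_cancel_right]
        isometry_toFun := Isometry.of_dist_eq fun x y => by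
          show dist ((x + e) * b - b) ((y + e) * b - b) = dist x y
          rw [dist_sub_right, hr, dist_add_right] }
    have hK0 : K 0 = 0 := by
      show (0 + e) * b - b = 0
      simp [he]
    refine ⟨K.toRealLinearIsometryEquivOfMapZero hK0, fun x => ?_⟩
    rw [IsometryEquiv.coe_toRealLinearIsometryEquivOfMapZero]
    rfl
  choose Φ hΦ using hL
  choose Ψ hΨ using hR
  -- the symmetric correction term
  have hM : ∀ x y : EuclideanSpace ℝ (Fin n), Φ (x + e) y - y = Ψ (y + e) x - x := by
    intro x y
    rw [hΦ, hΨ]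
    abel
  have hneg : ∀ x y : EuclideanSpace ℝ (Fin n),
      Φ (-x + e) y - y = -(Φ (x + e) y - y) := by
    intro x y
    rw [hM, hM, map_neg]
    abel
  have key : ∀ x y : EuclideanSpace ℝ (Fin n), Φ (x + e) y = y := by
    intro x y
    set M : EuclideanSpace ℝ (Fin n) := Φ (x + e) y - y with hMdef
    have h1 : ‖y + M‖ = ‖y‖ := by
      have h : y + M = Φ (x + e) y := by rw [hMdef]; abel
      rw [h, (Φ (x + e)).norm_map]
    have h2 : ‖y - M‖ = ‖y‖ := by
      have h4 := hneg x y
      rw [← hMdef] at h4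
      have h5 : Φ (-x + e) y = -M + y := sub_eq_iff_eq_add.mp h4
      have h6 : y - M = Φ (-x + e) y := by rw [h5]; abel
      rw [h6, (Φ (-x + e)).norm_map]
    have hp := parallelogram_law_with_norm ℝ y M
    rw [h1, h2] at hp
    have hM0 : ‖M‖ * ‖M‖ = 0 := by nlinarith [norm_nonneg y, norm_nonneg M]
    have hM0' : M = 0 := by rwa [mul_self_eq_zero, norm_eq_zero] at hM0
    exact sub_eq_zero.mp (hMdef ▸ hM0')
  intro a b
  have h1 : Φ a (b - e) = a * b - a := by
    rw [hΦ a (b - e), sub_add_cancel]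
  have h2 : Φ a (b - e) = b - e := by
    have h := key (a - e) (b - e)
    rwa [sub_add_cancel] at h
  have h3 : a * b - a = b - e := h1 ▸ h2
  have h4 : a * b = b - e + a := sub_eq_iff_eq_add.mp h3
  exact h4.trans (by abel)

/-- For every n, every group structure on Euclidean space ℝⁿ compatible with the Euclidean
metric d(x,y) = ‖x − y‖ is isomorphic to the additive group (ℝⁿ,+); in particular Euclidean
space is a natural metric space. -/
theorem euclidean_natural (n : ℕ) :
    (∀ s : Group (EuclideanSpace ℝ (Fin n)), Compatible (EuclideanSpace ℝ (Fin n)) s →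
      ∃ f : EuclideanSpace ℝ (Fin n) ≃ EuclideanSpace ℝ (Fin n),
        ∀ a b : EuclideanSpace ℝ (Fin n), f (s.mul a b) = f a + f b) ∧
    NaturalSpace (EuclideanSpace ℝ (Fin n)) := by
  have main : ∀ s : Group (EuclideanSpace ℝ (Fin n)),
      Compatible (EuclideanSpace ℝ (Fin n)) s →
      ∃ f : EuclideanSpace ℝ (Fin n) ≃ EuclideanSpace ℝ (Fin n),
        ∀ a b : EuclideanSpace ℝ (Fin n), f (s.mul a b) = f a + f b := by
    intro s hs
    refine ⟨Equiv.subRight s.one, fun a b => ?_⟩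
    simp only [Equiv.subRight_apply]
    rw [compatible_mul_eq s hs]
    abel
  refine ⟨main, ?_, ?_⟩
  · -- existence of a compatible group structure: addition
    refine ⟨euclideanAddGroupStruct n, ?_, ?_, ?_⟩
    · exact fun g x y => dist_add_left g x y
    · exact fun g x y => dist_add_right x y g
    · exact fun x y => dist_neg_neg x y
  · -- uniqueness up to isomorphism
    intro s t hs ht
    obtain ⟨f, hf⟩ := main s hs
    obtain ⟨g, hg⟩ := main t ht
    refine ⟨f.trans g.symm, fun a b => ?_⟩
    have hgs : ∀ u v, g.symm (u + v) = t.mul (g.symm u) (g.symm v) := by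
      intro u v
      apply g.injective
      rw [g.apply_symm_apply, hg, g.apply_symm_apply, g.apply_symm_apply]
    simp only [Equiv.trans_apply]
    rw [hf, hgs]
end

section
/- For every natural number n, the unit sphere Sⁿ = {x ∈ ℝ^{n+1} : ‖x‖ = 1}, equipped with the metric induced from the Euclidean metric of ℝ^{n+1}, is a natural metric space if and only if n = 0, n = 1, or n = 3. -/
open scoped RealInnerProductSpace

namespace SphereNat

variable {m : ℕ}

abbrev E (m : ℕ) := EuclideanSpace ℝ (Fin m)
abbrev X (m : ℕ) := Metric.sphere (0 : E m) 1

lemma norm_coe (x : X m) : ‖(x : E m)‖ = 1 := mem_sphere_zero_iff_norm.mp x.2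

lemma inner_self (x : X m) : ⟪(x : E m), (x : E m)⟫ = 1 := by
  rw [real_inner_self_eq_norm_sq, norm_coe]; norm_num

lemma inner_eq (x y : X m) : ⟪(x : E m), (y : E m)⟫ = 1 - dist x y ^ 2 / 2 := by
  rw [Subtype.dist_eq, dist_eq_norm]
  have h := @norm_sub_sq_real (E m) _ _ (x : E m) (y : E m)
  rw [norm_coe, norm_coe] at h
  nlinarith [h]

/-- standard orthonormal basis -/
noncomputable def b (m : ℕ) : OrthonormalBasis (Fin m) ℝ (E m) :=
  EuclideanSpace.basisFun (Fin m) ℝ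

/-- basis vectors as sphere points -/
noncomputable def B (m : ℕ) (i : Fin m) : X m :=
  ⟨b m i, by simp [mem_sphere_zero_iff_norm, (b m).orthonormal.1 i]⟩

lemma B_coe (i : Fin m) : ((B m i : X m) : E m) = b m i := rfl

lemma parsevalB (c : OrthonormalBasis (Fin m) ℝ (E m)) (x : X m) :
    ∑ i, ⟪(x : E m), c i⟫ ^ 2 = 1 := by
  have h := c.sum_inner_mul_inner (x : E m) (x : E m)
  rw [inner_self] at h
  rw [← h]
  refine Finset.sum_congr rfl fun i _ => ?_
  rw [real_inner_comm (c i) ((x : E m))]; ring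

lemma parseval (x : X m) : ∑ i, ⟪(x : E m), b m i⟫ ^ 2 = 1 := parsevalB (b m) x

/-- Any inner-product preserving self-map of the sphere is "linear": it is determined by
its values on the standard basis via the coordinates. -/
lemma expandB (c : OrthonormalBasis (Fin m) ℝ (E m)) (C : Fin m → X m)
    (hC : ∀ i, ((C i : X m) : E m) = c i) {f : X m → X m}
    (hf : ∀ x y : X m, ⟪((f x : X m) : E m), ((f y : X m) : E m)⟫ = ⟪(x : E m), (y : E m)⟫)
    (x : X m) :
    ((f x : X m) : E m) = ∑ i, ⟪(x : E m), c i⟫ • ((f (C i) : X m) : E m) := by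
  set a : Fin m → ℝ := fun i => ⟪(x : E m), c i⟫ with hc
  have horth : Orthonormal ℝ (fun i => ((f (C i) : X m) : E m)) := by
    rw [orthonormal_iff_ite]
    intro i j
    rw [hf]
    by_cases h : i = j
    · subst h; simpa using inner_self (C i)
    · simpa [hC _, h] using c.orthonormal.2 h
  have h1 : ⟪((f x : X m) : E m), ∑ i, a i • ((f (C i) : X m) : E m)⟫ = ∑ i, a i ^ 2 := by
    rw [inner_sum]
    refine Finset.sum_congr rfl fun i _ => ?_
    rw [real_inner_smul_right, hf, hC _]
    simp only [hc]; ring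
  have h2 : ⟪∑ i, a i • ((f (C i) : X m) : E m), ∑ j, a j • ((f (C j) : X m) : E m)⟫
      = ∑ i, a i ^ 2 := by
    rw [horth.inner_sum a a Finset.univ]
    refine Finset.sum_congr rfl fun i _ => ?_
    simp; ring
  have hvv : ⟪((f x : X m) : E m) - ∑ i, a i • ((f (C i) : X m) : E m),
      ((f x : X m) : E m) - ∑ i, a i • ((f (C i) : X m) : E m)⟫ = 0 := by
    have h1' : ⟪∑ i, a i • ((f (C i) : X m) : E m), ((f x : X m) : E m)⟫
        = ∑ i, a i ^ 2 := by rw [real_inner_comm]; exact h1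
    rw [inner_sub_sub_self, inner_self (f x), h1, h2, h1']
    have := parsevalB c x
    simp only [hc] at *
    linarith
  have hz := inner_self_eq_zero.mp hvv
  have := sub_eq_zero.mp hz
  exact this

lemma expand {f : X m → X m}
    (hf : ∀ x y : X m, ⟪((f x : X m) : E m), ((f y : X m) : E m)⟫ = ⟪(x : E m), (y : E m)⟫)
    (x : X m) :
    ((f x : X m) : E m) = ∑ i, ⟪(x : E m), b m i⟫ • ((f (B m i) : X m) : E m) :=
  expandB (b m) (B m) B_coe hf x

section Comp
variable (s : Group (X m))

/-- product as a vector -/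
noncomputable def pm (x y : X m) : E m := ((s.mul x y : X m) : E m)

lemma innerL (hs : Compatible (X m) s) (g x y : X m) : ⟪pm s g x, pm s g y⟫ = ⟪(x : E m), (y : E m)⟫ := by
  rw [pm, pm, inner_eq, inner_eq, hs.1 g x y]

lemma innerR (hs : Compatible (X m) s) (g x y : X m) : ⟪pm s x g, pm s y g⟫ = ⟪(x : E m), (y : E m)⟫ := by
  rw [pm, pm, inner_eq, inner_eq, hs.2.1 g x y]

lemma expandL (hs : Compatible (X m) s) (x y : X m) :
    pm s x y = ∑ i, ⟪(x : E m), b m i⟫ • pm s (B m i) y :=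
  expand (f := fun z => s.mul z y) (fun a c => innerR s hs y a c) x

lemma expandR (hs : Compatible (X m) s) (x y : X m) :
    pm s x y = ∑ i, ⟪(y : E m), b m i⟫ • pm s x (B m i) :=
  expand (f := fun z => s.mul x z) (fun a c => innerL s hs x a c) y

/-- negation on the sphere -/
def negX (x : X m) : X m := ⟨-(x : E m), by simp [mem_sphere_zero_iff_norm, norm_coe]⟩

@[simp] lemma negX_coe (x : X m) : ((negX x : X m) : E m) = -(x : E m) := rfl

lemma mul_negL (hs : Compatible (X m) s) (x y : X m) : s.mul (negX x) y = negX (s.mul x y) := by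
  apply Subtype.ext
  have h1 := expandL s hs (negX x) y
  have h2 := expandL s hs x y
  show pm s (negX x) y = -(pm s x y)
  rw [h1, h2, ← Finset.sum_neg_distrib]
  refine Finset.sum_congr rfl fun i _ => ?_
  rw [negX_coe, inner_neg_left, neg_smul]

lemma mul_negR (hs : Compatible (X m) s) (x y : X m) : s.mul x (negX y) = negX (s.mul x y) := by
  apply Subtype.ext
  have h1 := expandR s hs x (negX y)
  have h2 := expandR s hs x y
  show pm s x (negX y) = -(pm s x y)
  rw [h1, h2, ← Finset.sum_neg_distrib]
  refine Finset.sum_congr rfl fun i _ => ?_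
  rw [negX_coe, inner_neg_left, neg_smul]

lemma addL (hs : Compatible (X m) s) {x w u : X m} {c : ℝ} (h : (u : E m) = c • ((x : E m) + (w : E m))) (y : X m) :
    pm s u y = c • (pm s x y + pm s w y) := by
  rw [expandL s hs u y, expandL s hs x y, expandL s hs w y, ← Finset.sum_add_distrib,
    Finset.smul_sum]
  refine Finset.sum_congr rfl fun i _ => ?_
  rw [h, inner_smul_left, inner_add_left]
  simp only [map_add, RCLike.star_def, conj_trivial]
  rw [smul_add, smul_smul, smul_smul, ← add_smul, mul_add]

lemma addR (hs : Compatible (X m) s) {x w u : X m} {c : ℝ} (h : (u : E m) = c • ((x : E m) + (w : E m))) (y : X m) :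
    pm s y u = c • (pm s y x + pm s y w) := by
  rw [expandR s hs y u, expandR s hs y x, expandR s hs y w, ← Finset.sum_add_distrib,
    Finset.smul_sum]
  refine Finset.sum_congr rfl fun i _ => ?_
  rw [h, inner_smul_left, inner_add_left]
  simp only [map_add, RCLike.star_def, conj_trivial]
  rw [smul_add, smul_smul, smul_smul, ← add_smul, mul_add]


lemma eq_of_inner_basis {v w : E m} (h : ∀ i, ⟪v, b m i⟫ = ⟪w, b m i⟫) : v = w := by
  have hv := (b m).sum_repr' v
  have hw := (b m).sum_repr' w
  rw [← hv, ← hw]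
  refine Finset.sum_congr rfl fun i _ => ?_
  have hi : ⟪b m i, v⟫ = ⟪b m i, w⟫ :=
    (real_inner_comm v _).trans ((h i).trans (real_inner_comm w _).symm)
  rw [hi]

lemma four (hs : Compatible (X m) s) (x y w z : X m) :
    ⟪pm s x y, pm s w z⟫ + ⟪pm s w y, pm s x z⟫
      = 2 * ⟪(x : E m), (w : E m)⟫ * ⟪(y : E m), (z : E m)⟫ := by
  by_cases h : (x : E m) + (w : E m) = 0
  · have hw : w = negX x := by
      apply Subtype.ext
      show (w : E m) = -(x : E m)
      exact eq_neg_of_add_eq_zero_right h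
    subst hw
    have h1 : pm s (negX x) y = -(pm s x y) := by
      show ((s.mul (negX x) y : X m) : E m) = _
      rw [mul_negL s hs]; rfl
    have h2 : pm s (negX x) z = -(pm s x z) := by
      show ((s.mul (negX x) z : X m) : E m) = _
      rw [mul_negL s hs]; rfl
    rw [h1, h2, negX_coe, inner_neg_right, inner_neg_left, inner_neg_right,
      innerL s hs x y z, inner_self x]
    ring
  · set c : ℝ := ‖(x : E m) + (w : E m)‖ with hc
    have hcpos : 0 < c := by
      rw [hc]; exact norm_pos_iff.mpr h
    have hcsq : c ^ 2 = 2 + 2 * ⟪(x : E m), (w : E m)⟫ := by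
      rw [hc, norm_add_sq_real, norm_coe, norm_coe]
      ring
    have hmemu : c⁻¹ • ((x : E m) + (w : E m)) ∈ Metric.sphere (0 : E m) 1 := by
      rw [mem_sphere_zero_iff_norm, norm_smul, ← hc]
      simp [abs_of_pos hcpos, inv_mul_cancel₀ (ne_of_gt hcpos)]
    set u : X m := ⟨c⁻¹ • ((x : E m) + (w : E m)), hmemu⟩ with hu
    have hcoe : (u : E m) = c⁻¹ • ((x : E m) + (w : E m)) := rfl
    have h1 := addL s hs hcoe y
    have h2 := addL s hs hcoe z
    have h3 : ⟪pm s u y, pm s u z⟫ = ⟪(y : E m), (z : E m)⟫ := innerL s hs u y z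
    rw [h1, h2, real_inner_smul_left, real_inner_smul_right, inner_add_left,
      inner_add_right, inner_add_right, innerL s hs x y z, innerL s hs w y z] at h3
    have hne : c ≠ 0 := ne_of_gt hcpos
    have hccc : c * c = 2 + 2 * ⟪(x : E m), (w : E m)⟫ := by nlinarith [hcsq]
    have h5 : ⟪(y : E m), (z : E m)⟫ + ⟪pm s x y, pm s w z⟫ +
        (⟪pm s w y, pm s x z⟫ + ⟪(y : E m), (z : E m)⟫)
        = c * (c * ⟪(y : E m), (z : E m)⟫) := by
      calc ⟪(y : E m), (z : E m)⟫ + ⟪pm s x y, pm s w z⟫ +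
          (⟪pm s w y, pm s x z⟫ + ⟪(y : E m), (z : E m)⟫)
          = c * (c * (c⁻¹ * (c⁻¹ * (⟪(y : E m), (z : E m)⟫ + ⟪pm s x y, pm s w z⟫ +
            (⟪pm s w y, pm s x z⟫ + ⟪(y : E m), (z : E m)⟫))))) := by
            field_simp
        _ = c * (c * ⟪(y : E m), (z : E m)⟫) := by rw [h3]
    have h6 : c * (c * ⟪(y : E m), (z : E m)⟫)
        = (2 + 2 * ⟪(x : E m), (w : E m)⟫) * ⟪(y : E m), (z : E m)⟫ := by
      rw [← mul_assoc, hccc]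
    linarith [h5, h6]

/-- the identity element -/
noncomputable def eX : X m := s.one

lemma one_mulX (x : X m) : s.mul (eX s) x = x := s.one_mul x
lemma mul_oneX (x : X m) : s.mul x (eX s) = x := s.mul_one x

/-- square of an imaginary unit is -1 -/
lemma sq_imaginary (hs : Compatible (X m) s) (u : X m)
    (hu : ⟪(u : E m), ((eX s : X m) : E m)⟫ = 0) :
    pm s u u = -((eX s : X m) : E m) := by
  apply eq_of_inner_basis
  intro i
  have h4 := four s hs u u (eX s) (B m i)
  have he1 : pm s (eX s) u = (u : E m) := by rw [pm, one_mulX]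
  have he2 : pm s (eX s) (B m i) = ((B m i : X m) : E m) := by rw [pm, one_mulX]
  rw [he1, he2] at h4
  have h5 : ⟪(u : E m), pm s u (B m i)⟫ = ⟪((eX s : X m) : E m), ((B m i : X m) : E m)⟫ := by
    have : (u : E m) = pm s u (eX s) := by rw [pm, mul_oneX]
    rw [this, innerL s hs]
  rw [h5, hu] at h4
  rw [inner_neg_left]
  rw [B_coe] at h4
  linarith

/-- orthogonal imaginary units anticommute -/
lemma anticomm (hs : Compatible (X m) s) (u v : X m)
    (hu : ⟪(u : E m), ((eX s : X m) : E m)⟫ = 0)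
    (hv : ⟪(v : E m), ((eX s : X m) : E m)⟫ = 0)
    (huv : ⟪(u : E m), (v : E m)⟫ = 0) :
    s.mul u v = negX (s.mul v u) := by
  have hmem : (Real.sqrt 2)⁻¹ • ((u : E m) + (v : E m)) ∈ Metric.sphere (0 : E m) 1 := by
    rw [mem_sphere_zero_iff_norm, norm_smul]
    have hn : ‖(u : E m) + (v : E m)‖ ^ 2 = 2 := by
      rw [norm_add_sq_real, norm_coe, norm_coe, huv]; ring
    have : ‖(u : E m) + (v : E m)‖ = Real.sqrt 2 := by
      rw [← Real.sqrt_sq (norm_nonneg _), hn]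
    rw [this, Real.norm_eq_abs, abs_of_nonneg (inv_nonneg.mpr (Real.sqrt_nonneg 2))]
    exact inv_mul_cancel₀ (by positivity)
  set z : X m := ⟨(Real.sqrt 2)⁻¹ • ((u : E m) + (v : E m)), hmem⟩ with hzdef
  have hzcoe : (z : E m) = (Real.sqrt 2)⁻¹ • ((u : E m) + (v : E m)) := rfl
  have hz : ⟪(z : E m), ((eX s : X m) : E m)⟫ = 0 := by
    rw [hzcoe, real_inner_smul_left, inner_add_left, hu, hv]; ring
  have hsq := sq_imaginary s hs z hz
  have h1 := addL s hs hzcoe z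
  have h2 := addR s hs hzcoe u
  have h3 := addR s hs hzcoe v
  rw [h1, h2, h3] at hsq
  have hsqu := sq_imaginary s hs u hu
  have hsqv := sq_imaginary s hs v hv
  rw [hsqu, hsqv] at hsq
  have h2inv : (Real.sqrt 2)⁻¹ * (Real.sqrt 2)⁻¹ = (2:ℝ)⁻¹ := by
    rw [← mul_inv]
    congr 1
    exact Real.mul_self_sqrt (by norm_num)
  rw [smul_add, smul_smul, smul_smul, h2inv] at hsq
  have key : pm s u v + pm s v u = 0 := by
    have h := congrArg (fun t => (2:ℝ) • t) hsq
    simp only [smul_add, smul_smul] at h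
    norm_num at h
    linear_combination (norm := module) h
  apply Subtype.ext
  show pm s u v = -(pm s v u)
  exact eq_neg_of_add_eq_zero_left key

lemma negX_negX (x : X m) : negX (negX x) = x := by
  apply Subtype.ext; show -(-(x : E m)) = (x : E m); rw [neg_neg]

lemma k_imaginary (hs : Compatible (X m) s) (u v : X m)
    (hu : ⟪(u : E m), ((eX s : X m) : E m)⟫ = 0)
    (hv : ⟪(v : E m), ((eX s : X m) : E m)⟫ = 0)
    (huv : ⟪(u : E m), (v : E m)⟫ = 0) :
    ⟪pm s u v, ((eX s : X m) : E m)⟫ = 0 ∧ ⟪pm s u v, (u : E m)⟫ = 0 ∧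
      ⟪pm s u v, (v : E m)⟫ = 0 := by
  refine ⟨?_, ?_, ?_⟩
  · have h4 := four s hs u v (eX s) (eX s)
    have he1 : pm s (eX s) v = (v : E m) := by rw [pm, one_mulX]
    have he2 : pm s u (eX s) = (u : E m) := by rw [pm, mul_oneX]
    have he3 : pm s (eX s) (eX s) = ((eX s : X m) : E m) := by rw [pm, one_mulX]
    rw [he1, he2, he3, hu] at h4
    have : ⟪(v : E m), (u : E m)⟫ = 0 := by rw [real_inner_comm]; exact huv
    rw [this] at h4
    linarith
  · have : (u : E m) = pm s u (eX s) := by rw [pm, mul_oneX]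
    rw [this, innerL s hs u v (eX s), hv]
  · have : (v : E m) = pm s (eX s) v := by rw [pm, one_mulX]
    rw [this, innerR s hs v u (eX s), hu]

lemma exists_unit_orthogonal {r : ℕ} (v : Fin r → E m) (hr : r < m) :
    ∃ w : X m, ∀ i, ⟪(w : E m), v i⟫ = 0 := by
  set K : Submodule ℝ (E m) := Submodule.span ℝ (Set.range v) with hK
  have hKlt : K ≠ ⊤ := by
    intro htop
    have h1 : Module.finrank ℝ K ≤ r := by
      rw [hK]; simpa [Set.finrank] using finrank_range_le_card v
    have h2 : Module.finrank ℝ (E m) = m := finrank_euclideanSpace_fin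
    rw [htop] at h1
    rw [finrank_top] at h1
    omega
  have hbot : Kᗮ ≠ ⊥ := fun hb => hKlt (Submodule.orthogonal_eq_bot_iff.mp hb)
  obtain ⟨w', hw'K, hw'ne⟩ := Submodule.exists_mem_ne_zero_of_ne_bot hbot
  have hnorm : ‖(‖w'‖)⁻¹ • w'‖ = 1 := by
    rw [norm_smul, Real.norm_eq_abs, abs_of_nonneg (inv_nonneg.mpr (norm_nonneg _))]
    exact inv_mul_cancel₀ (norm_ne_zero_iff.mpr hw'ne)
  refine ⟨⟨(‖w'‖)⁻¹ • w', mem_sphere_zero_iff_norm.mpr hnorm⟩, fun i => ?_⟩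
  show ⟪(‖w'‖)⁻¹ • w', v i⟫ = 0
  rw [real_inner_smul_left]
  have : ⟪v i, w'⟫ = 0 := by
    have := (Submodule.mem_orthogonal K w').mp hw'K
    exact this (v i) (Submodule.subset_span ⟨i, rfl⟩)
  rw [real_inner_comm, this, mul_zero]

theorem no_compatible (hm : m = 3 ∨ 5 ≤ m) (hcomp : Compatible (X m) s) : False := by
  have hm3 : 3 ≤ m := by omega
  -- find u ⊥ e
  obtain ⟨u, hu⟩ := exists_unit_orthogonal (m := m) ![((eX s : X m) : E m)] (by omega)
  have hue : ⟪(u : E m), ((eX s : X m) : E m)⟫ = 0 := by simpa using hu 0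
  obtain ⟨v, hv⟩ := exists_unit_orthogonal (m := m) ![((eX s : X m) : E m), (u : E m)] (by omega)
  have hve : ⟪(v : E m), ((eX s : X m) : E m)⟫ = 0 := by simpa using hv 0
  have hvu : ⟪(v : E m), (u : E m)⟫ = 0 := by simpa using hv 1
  have huv : ⟪(u : E m), (v : E m)⟫ = 0 := by rw [real_inner_comm]; exact hvu
  set k : X m := s.mul u v with hk
  obtain ⟨hke0, hku0, hkv0⟩ := k_imaginary s hcomp u v hue hve huv
  have hke : ⟪(k : E m), ((eX s : X m) : E m)⟫ = 0 := hke0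
  have hku : ⟪(k : E m), (u : E m)⟫ = 0 := hku0
  have hkv : ⟪(k : E m), (v : E m)⟫ = 0 := hkv0
  have honb : Orthonormal ℝ ![((eX s : X m) : E m), (u : E m), (v : E m), (k : E m)] := by
    rw [orthonormal_iff_ite]
    intro i j
    have hek : ⟪((eX s : X m) : E m), (k : E m)⟫ = 0 := by rw [real_inner_comm]; exact hke
    have huk : ⟪(u : E m), (k : E m)⟫ = 0 := by rw [real_inner_comm]; exact hku
    have hvk : ⟪(v : E m), (k : E m)⟫ = 0 := by rw [real_inner_comm]; exact hkv
    have heu : ⟪((eX s : X m) : E m), (u : E m)⟫ = 0 := by rw [real_inner_comm]; exact hue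
    have hev : ⟪((eX s : X m) : E m), (v : E m)⟫ = 0 := by rw [real_inner_comm]; exact hve
    have hee := inner_self (eX s)
    have huu := inner_self u
    have hvv := inner_self v
    have hkk := inner_self k
    fin_cases i <;> fin_cases j <;>
      simp only [Matrix.cons_val_zero, Matrix.cons_val_one, Matrix.head_cons,
        Matrix.cons_val_two, Matrix.tail_cons, Matrix.cons_val_three, Fin.isValue] <;>
      norm_num <;>
      first
        | exact hee | exact huu | exact hvv | exact hkk
        | exact hue | exact hve | exact hvu | exact huv
        | exact hke | exact hku | exact hkv | exact hek | exact huk | exact hvk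
        | exact heu | exact hev
  by_cases hm5 : m = 3
  · subst hm5
    have hli := honb.linearIndependent
    have hcard := hli.fintype_card_le_finrank
    rw [finrank_euclideanSpace_fin] at hcard
    simp at hcard
  · have hm5' : 5 ≤ m := by omega
    obtain ⟨w, hw⟩ := exists_unit_orthogonal
      (m := m) ![((eX s : X m) : E m), (u : E m), (v : E m), (k : E m)] (by omega)
    have hwe : ⟪(w : E m), ((eX s : X m) : E m)⟫ = 0 := by simpa using hw 0
    have hwu : ⟪(w : E m), (u : E m)⟫ = 0 := by simpa using hw 1
    have hwv : ⟪(w : E m), (v : E m)⟫ = 0 := by simpa using hw 2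
    have hwk : ⟪(w : E m), (k : E m)⟫ = 0 := by simpa using hw 3
    -- anticommutation relations
    have hau : s.mul w u = negX (s.mul u w) := anticomm s hcomp w u hwe hue hwu
    have hav : s.mul w v = negX (s.mul v w) := anticomm s hcomp w v hwe hve hwv
    have hak : s.mul w k = negX (s.mul k w) := anticomm s hcomp w k hwe hke hwk
    -- associativity chain
    have hchain : s.mul w k = s.mul k w := by
      calc s.mul w k = s.mul (s.mul w u) v := (s.mul_assoc w u v).symm
        _ = s.mul (negX (s.mul u w)) v := by rw [hau]
        _ = negX (s.mul (s.mul u w) v) := mul_negL s hcomp _ _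
        _ = negX (s.mul u (s.mul w v)) := congrArg negX (s.mul_assoc u w v)
        _ = negX (s.mul u (negX (s.mul v w))) := by rw [hav]
        _ = negX (negX (s.mul u (s.mul v w))) := by rw [mul_negR s hcomp]
        _ = s.mul u (s.mul v w) := negX_negX _
        _ = s.mul (s.mul u v) w := (s.mul_assoc u v w).symm
        _ = s.mul k w := rfl
    rw [hak] at hchain
    have hcoe : -((s.mul k w : X m) : E m) = ((s.mul k w : X m) : E m) :=
      congrArg Subtype.val hchain
    have hzero : ((s.mul k w : X m) : E m) = 0 := by
      have h2 : (2:ℝ) • ((s.mul k w : X m) : E m) = 0 := by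
        rw [two_smul]
        nth_rewrite 1 [← hcoe]
        exact neg_add_cancel _
      have := smul_eq_zero.mp h2
      rcases this with h | h
      · norm_num at h
      · exact h
    have := norm_coe (s.mul k w)
    rw [hzero] at this
    simp at this

lemma expandLB (hs : Compatible (X m) s) (c : OrthonormalBasis (Fin m) ℝ (E m))
    (C : Fin m → X m) (hC : ∀ i, ((C i : X m) : E m) = c i) (x y : X m) :
    pm s x y = ∑ i, ⟪(x : E m), c i⟫ • pm s (C i) y :=
  expandB c C hC (f := fun z => s.mul z y) (fun a c => innerR s hs y a c) x

lemma expandRB (hs : Compatible (X m) s) (c : OrthonormalBasis (Fin m) ℝ (E m))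
    (C : Fin m → X m) (hC : ∀ i, ((C i : X m) : E m) = c i) (x y : X m) :
    pm s x y = ∑ j, ⟪(y : E m), c j⟫ • pm s x (C j) :=
  expandB c C hC (f := fun z => s.mul x z) (fun a c => innerL s hs x a c) y

lemma expand2B (hs : Compatible (X m) s) (c : OrthonormalBasis (Fin m) ℝ (E m))
    (C : Fin m → X m) (hC : ∀ i, ((C i : X m) : E m) = c i) (x y : X m) :
    pm s x y = ∑ i, ∑ j, (⟪(x : E m), c i⟫ * ⟪(y : E m), c j⟫) • pm s (C i) (C j) := by
  rw [expandLB s hs c C hC x y]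
  refine Finset.sum_congr rfl fun i _ => ?_
  rw [expandRB s hs c C hC (C i) y, Finset.smul_sum]
  refine Finset.sum_congr rfl fun j _ => ?_
  rw [smul_smul]

end Comp

/-- promote an orthonormal family of full cardinality to an orthonormal basis -/
noncomputable def onbOfFamily (hm : 0 < m) (f : Fin m → E m) (hf : Orthonormal ℝ f) :
    OrthonormalBasis (Fin m) ℝ (E m) := by
  have : Nonempty (Fin m) := ⟨⟨0, hm⟩⟩
  have hcard : Fintype.card (Fin m) = Module.finrank ℝ (E m) := by
    simp [finrank_euclideanSpace_fin]
  exact (basisOfLinearIndependentOfCardEqFinrank hf.linearIndependent hcard).toOrthonormalBasis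
    (by rwa [coe_basisOfLinearIndependentOfCardEqFinrank])

lemma onbOfFamily_apply (hm : 0 < m) (f : Fin m → E m) (hf : Orthonormal ℝ f) (i : Fin m) :
    onbOfFamily hm f hf i = f i := by
  have : Nonempty (Fin m) := ⟨⟨0, hm⟩⟩
  show (onbOfFamily hm f hf : Fin m → E m) i = f i
  rw [onbOfFamily, Module.Basis.coe_toOrthonormalBasis, coe_basisOfLinearIndependentOfCardEqFinrank]

section Iso

/-- Transport: two compatible group structures with a common multiplication table with respect
to orthonormal bases are isomorphic. -/
theorem iso_of_table (hm : 0 < m) (s t : Group (X m))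
    (hs : Compatible (X m) s) (ht : Compatible (X m) t)
    (cs ct : Fin m → X m)
    (hcs : Orthonormal ℝ (fun i => ((cs i : X m) : E m)))
    (hct : Orthonormal ℝ (fun i => ((ct i : X m) : E m)))
    (T : Fin m → Fin m → Fin m → ℝ)
    (hTs : ∀ i j, pm s (cs i) (cs j) = ∑ k, T i j k • ((cs k : X m) : E m))
    (hTt : ∀ i j, pm t (ct i) (ct j) = ∑ k, T i j k • ((ct k : X m) : E m)) :
    GroupStructIso s t := by
  set Cs : OrthonormalBasis (Fin m) ℝ (E m) := onbOfFamily hm _ hcs with hCs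
  set Ct : OrthonormalBasis (Fin m) ℝ (E m) := onbOfFamily hm _ hct with hCt
  have hCsi : ∀ i, ((cs i : X m) : E m) = Cs i := fun i => (onbOfFamily_apply hm _ hcs i).symm
  have hCti : ∀ i, ((ct i : X m) : E m) = Ct i := fun i => (onbOfFamily_apply hm _ hct i).symm
  -- the forward map
  have memF : ∀ x : X m, (∑ i, ⟪(x : E m), ((cs i : X m) : E m)⟫ • ((ct i : X m) : E m))
      ∈ Metric.sphere (0 : E m) 1 := by
    intro x
    rw [mem_sphere_zero_iff_norm, ← Real.sqrt_one, ← Real.sqrt_sq (norm_nonneg _)]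
    congr 1
    rw [← real_inner_self_eq_norm_sq, hct.inner_sum _ _ Finset.univ]
    have := parsevalB Cs x
    rw [← this]
    refine Finset.sum_congr rfl fun i _ => ?_
    rw [← hCsi i]
    simp; ring
  have memG : ∀ x : X m, (∑ i, ⟪(x : E m), ((ct i : X m) : E m)⟫ • ((cs i : X m) : E m))
      ∈ Metric.sphere (0 : E m) 1 := by
    intro x
    rw [mem_sphere_zero_iff_norm, ← Real.sqrt_one, ← Real.sqrt_sq (norm_nonneg _)]
    congr 1
    rw [← real_inner_self_eq_norm_sq, hcs.inner_sum _ _ Finset.univ]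
    have := parsevalB Ct x
    rw [← this]
    refine Finset.sum_congr rfl fun i _ => ?_
    rw [← hCti i]
    simp; ring
  set F : X m → X m := fun x => ⟨_, memF x⟩ with hF
  set G : X m → X m := fun x => ⟨_, memG x⟩ with hG
  have hFcoe : ∀ x : X m, ((F x : X m) : E m)
      = ∑ i, ⟪(x : E m), ((cs i : X m) : E m)⟫ • ((ct i : X m) : E m) := fun _ => rfl
  have hGcoe : ∀ x : X m, ((G x : X m) : E m)
      = ∑ i, ⟪(x : E m), ((ct i : X m) : E m)⟫ • ((cs i : X m) : E m) := fun _ => rfl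
  have hFinner : ∀ (x : X m) (i : Fin m),
      ⟪((F x : X m) : E m), ((ct i : X m) : E m)⟫ = ⟪(x : E m), ((cs i : X m) : E m)⟫ := by
    intro x i
    rw [hFcoe]
    exact hct.inner_left_fintype _ i
  have hGinner : ∀ (x : X m) (i : Fin m),
      ⟪((G x : X m) : E m), ((cs i : X m) : E m)⟫ = ⟪(x : E m), ((ct i : X m) : E m)⟫ := by
    intro x i
    rw [hGcoe]
    exact hcs.inner_left_fintype _ i
  have hGF : ∀ x, G (F x) = x := by
    intro x
    apply Subtype.ext
    rw [hGcoe]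
    have : ∀ i, ⟪((F x : X m) : E m), ((ct i : X m) : E m)⟫
        = ⟪(x : E m), ((cs i : X m) : E m)⟫ := hFinner x
    calc ∑ i, ⟪((F x : X m) : E m), ((ct i : X m) : E m)⟫ • ((cs i : X m) : E m)
        = ∑ i, ⟪(x : E m), ((cs i : X m) : E m)⟫ • ((cs i : X m) : E m) := by
          refine Finset.sum_congr rfl fun i _ => by rw [this i]
      _ = ∑ i, ⟪Cs i, (x : E m)⟫ • Cs i := by
          refine Finset.sum_congr rfl fun i _ => by rw [← hCsi i, real_inner_comm]
      _ = (x : E m) := Cs.sum_repr' (x : E m)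
  have hFG : ∀ x, F (G x) = x := by
    intro x
    apply Subtype.ext
    rw [hFcoe]
    calc ∑ i, ⟪((G x : X m) : E m), ((cs i : X m) : E m)⟫ • ((ct i : X m) : E m)
        = ∑ i, ⟪(x : E m), ((ct i : X m) : E m)⟫ • ((ct i : X m) : E m) := by
          refine Finset.sum_congr rfl fun i _ => by rw [hGinner x i]
      _ = ∑ i, ⟪Ct i, (x : E m)⟫ • Ct i := by
          refine Finset.sum_congr rfl fun i _ => by rw [← hCti i, real_inner_comm]
      _ = (x : E m) := Ct.sum_repr' (x : E m)
  refine ⟨⟨F, G, hGF, hFG⟩, ?_⟩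
  intro x y
  show F (s.mul x y) = t.mul (F x) (F y)
  apply Subtype.ext
  rw [hFcoe]
  have hxy : pm s x y = ∑ i, ∑ j,
      (⟪(x : E m), ((cs i : X m) : E m)⟫ * ⟪(y : E m), ((cs j : X m) : E m)⟫) •
        pm s (cs i) (cs j) := by
    have := expand2B s hs Cs cs hCsi x y
    simpa only [hCsi] using this
  have hinner : ∀ k, ⟪((s.mul x y : X m) : E m), ((cs k : X m) : E m)⟫
      = ∑ i, ∑ j, ⟪(x : E m), ((cs i : X m) : E m)⟫ * ⟪(y : E m), ((cs j : X m) : E m)⟫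
        * T i j k := by
    intro k
    show ⟪pm s x y, ((cs k : X m) : E m)⟫ = _
    rw [hxy, sum_inner]
    refine Finset.sum_congr rfl fun i _ => ?_
    rw [sum_inner]
    refine Finset.sum_congr rfl fun j _ => ?_
    rw [real_inner_smul_left, hTs i j, sum_inner]
    have : ∀ l ∈ Finset.univ, ⟪T i j l • ((cs l : X m) : E m), ((cs k : X m) : E m)⟫
        = if l = k then T i j l else 0 := by
      intro l _
      rw [real_inner_smul_left]
      rcases eq_or_ne l k with h | h
      · subst h; rw [if_pos rfl, inner_self]; ring
      · rw [if_neg h]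
        have := hcs.2 h
        rw [this, mul_zero]
    rw [Finset.sum_congr rfl this, Finset.sum_ite_eq' Finset.univ k (fun l => T i j l)]
    simp
  -- right hand side
  have hrhs : pm t (F x) (F y) = ∑ i, ∑ j,
      (⟪(x : E m), ((cs i : X m) : E m)⟫ * ⟪(y : E m), ((cs j : X m) : E m)⟫) •
        ∑ k, T i j k • ((ct k : X m) : E m) := by
    have h0 := expand2B t ht Ct ct hCti (F x) (F y)
    have h1 : pm t (F x) (F y) = ∑ i, ∑ j,
        (⟪(x : E m), ((cs i : X m) : E m)⟫ * ⟪(y : E m), ((cs j : X m) : E m)⟫) •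
          pm t (ct i) (ct j) := by
      rw [h0]
      refine Finset.sum_congr rfl fun i _ => Finset.sum_congr rfl fun j _ => ?_
      rw [← hCti i, ← hCti j, hFinner x i, hFinner y j]
    rw [h1]
    refine Finset.sum_congr rfl fun i _ => Finset.sum_congr rfl fun j _ => ?_
    rw [hTt i j]
  show ∑ k, ⟪((s.mul x y : X m) : E m), ((cs k : X m) : E m)⟫ • ((ct k : X m) : E m)
      = pm t (F x) (F y)
  rw [hrhs]
  calc ∑ k, ⟪((s.mul x y : X m) : E m), ((cs k : X m) : E m)⟫ • ((ct k : X m) : E m)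
      = ∑ k, ∑ i, ∑ j, (⟪(x : E m), ((cs i : X m) : E m)⟫ *
          ⟪(y : E m), ((cs j : X m) : E m)⟫ * T i j k) • ((ct k : X m) : E m) := by
        refine Finset.sum_congr rfl fun k _ => ?_
        rw [hinner k, Finset.sum_smul]
        refine Finset.sum_congr rfl fun i _ => ?_
        rw [Finset.sum_smul]
    _ = ∑ i, ∑ j, ∑ k, (⟪(x : E m), ((cs i : X m) : E m)⟫ *
          ⟪(y : E m), ((cs j : X m) : E m)⟫ * T i j k) • ((ct k : X m) : E m) := by
        rw [Finset.sum_comm]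
        refine Finset.sum_congr rfl fun i _ => Finset.sum_comm
    _ = ∑ i, ∑ j, (⟪(x : E m), ((cs i : X m) : E m)⟫ * ⟪(y : E m), ((cs j : X m) : E m)⟫) •
          ∑ k, T i j k • ((ct k : X m) : E m) := by
        refine Finset.sum_congr rfl fun i _ => Finset.sum_congr rfl fun j _ => ?_
        rw [Finset.smul_sum]
        refine Finset.sum_congr rfl fun k _ => ?_
        rw [smul_smul]


end Iso

section Tables
variable (s : Group (X m))

lemma exists_uv (hm : 3 ≤ m) : ∃ u v : X m,
    ⟪(u : E m), ((eX s : X m) : E m)⟫ = 0 ∧ ⟪(v : E m), ((eX s : X m) : E m)⟫ = 0 ∧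
      ⟪(u : E m), (v : E m)⟫ = 0 := by
  obtain ⟨u, hu⟩ := exists_unit_orthogonal (m := m) ![((eX s : X m) : E m)] (by omega)
  obtain ⟨v, hv⟩ := exists_unit_orthogonal (m := m) ![((eX s : X m) : E m), (u : E m)] (by omega)
  refine ⟨u, v, by simpa using hu 0, by simpa using hv 0, ?_⟩
  rw [real_inner_comm]
  simpa using hv 1

lemma orthonormal_euvk (hs : Compatible (X m) s) (u v : X m)
    (hue : ⟪(u : E m), ((eX s : X m) : E m)⟫ = 0)
    (hve : ⟪(v : E m), ((eX s : X m) : E m)⟫ = 0)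
    (huv : ⟪(u : E m), (v : E m)⟫ = 0) :
    Orthonormal ℝ
      ![((eX s : X m) : E m), (u : E m), (v : E m), ((s.mul u v : X m) : E m)] := by
  set k : X m := s.mul u v with hk
  obtain ⟨hke0, hku0, hkv0⟩ := k_imaginary s hs u v hue hve huv
  have hke : ⟪(k : E m), ((eX s : X m) : E m)⟫ = 0 := hke0
  have hku : ⟪(k : E m), (u : E m)⟫ = 0 := hku0
  have hkv : ⟪(k : E m), (v : E m)⟫ = 0 := hkv0
  have hvu : ⟪(v : E m), (u : E m)⟫ = 0 := by rw [real_inner_comm]; exact huv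
  rw [orthonormal_iff_ite]
  intro i j
  have hek : ⟪((eX s : X m) : E m), (k : E m)⟫ = 0 := by rw [real_inner_comm]; exact hke
  have huk : ⟪(u : E m), (k : E m)⟫ = 0 := by rw [real_inner_comm]; exact hku
  have hvk : ⟪(v : E m), (k : E m)⟫ = 0 := by rw [real_inner_comm]; exact hkv
  have heu : ⟪((eX s : X m) : E m), (u : E m)⟫ = 0 := by rw [real_inner_comm]; exact hue
  have hev : ⟪((eX s : X m) : E m), (v : E m)⟫ = 0 := by rw [real_inner_comm]; exact hve
  have hee := inner_self (eX s)
  have huu := inner_self u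
  have hvv := inner_self v
  have hkk := inner_self k
  fin_cases i <;> fin_cases j <;>
    simp only [Matrix.cons_val_zero, Matrix.cons_val_one, Matrix.head_cons,
      Matrix.cons_val_two, Matrix.tail_cons, Matrix.cons_val_three, Fin.isValue] <;>
    norm_num <;>
    first
      | exact hee | exact huu | exact hvv | exact hkk
      | exact hue | exact hve | exact hvu | exact huv
      | exact hke | exact hku | exact hkv | exact hek | exact huk | exact hvk
      | exact heu | exact hev

/-- the quaternion multiplication table -/
def quatT : Fin 4 → Fin 4 → Fin 4 → ℝ :=
  ![![![1,0,0,0], ![0,1,0,0], ![0,0,1,0], ![0,0,0,1]],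
    ![![0,1,0,0], ![-1,0,0,0], ![0,0,0,1], ![0,0,-1,0]],
    ![![0,0,1,0], ![0,0,0,-1], ![-1,0,0,0], ![0,1,0,0]],
    ![![0,0,0,1], ![0,0,1,0], ![0,-1,0,0], ![-1,0,0,0]]]

lemma table4 (hs : Compatible (X m) s) (u v : X m)
    (hue : ⟪(u : E m), ((eX s : X m) : E m)⟫ = 0)
    (hve : ⟪(v : E m), ((eX s : X m) : E m)⟫ = 0)
    (huv : ⟪(u : E m), (v : E m)⟫ = 0) :
    ∀ i j, pm s (![eX s, u, v, s.mul u v] i) (![eX s, u, v, s.mul u v] j)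
      = ∑ k, quatT i j k • ((![eX s, u, v, s.mul u v] k : X m) : E m) := by
  set k : X m := s.mul u v with hk
  obtain ⟨hke0, hku0, hkv0⟩ := k_imaginary s hs u v hue hve huv
  have hke : ⟪(k : E m), ((eX s : X m) : E m)⟫ = 0 := hke0
  have hknu : ⟪(u : E m), (k : E m)⟫ = 0 := by rw [real_inner_comm]; exact hku0
  have hknv : ⟪(v : E m), (k : E m)⟫ = 0 := by rw [real_inner_comm]; exact hkv0
  -- subtype-level relations
  have squ : s.mul u u = negX (eX s) := Subtype.ext (sq_imaginary s hs u hue)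
  have sqv : s.mul v v = negX (eX s) := Subtype.ext (sq_imaginary s hs v hve)
  have sqk : s.mul k k = negX (eX s) := Subtype.ext (sq_imaginary s hs k hke)
  have hvu : s.mul v u = negX k := by
    have := anticomm s hs u v hue hve huv
    rw [hk, this, negX_negX]
  have huk : s.mul u k = negX v := by
    calc s.mul u k = s.mul (s.mul u u) v := (s.mul_assoc u u v).symm
      _ = s.mul (negX (eX s)) v := by rw [squ]
      _ = negX (s.mul (eX s) v) := mul_negL s hs _ _
      _ = negX v := by rw [one_mulX]
  have hkv' : s.mul k v = negX u := by
    calc s.mul k v = s.mul u (s.mul v v) := s.mul_assoc u v v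
      _ = s.mul u (negX (eX s)) := by rw [sqv]
      _ = negX (s.mul u (eX s)) := mul_negR s hs _ _
      _ = negX u := by rw [mul_oneX]
  have hku' : s.mul k u = v := by
    have h := anticomm s hs u k hue hke hknu
    rw [huk] at h
    have := congrArg negX h
    rw [negX_negX, negX_negX] at this
    exact this.symm
  have hvk' : s.mul v k = u := by
    have h := anticomm s hs v k hve hke hknv
    rw [hkv', negX_negX] at h
    exact h
  -- coe versions
  have e1 : ∀ x : X m, pm s (eX s) x = (x : E m) := fun x => congrArg Subtype.val (one_mulX s x)
  have e2 : ∀ x : X m, pm s x (eX s) = (x : E m) := fun x => congrArg Subtype.val (mul_oneX s x)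
  have cuu : pm s u u = -((eX s : X m) : E m) := congrArg Subtype.val squ
  have cvv : pm s v v = -((eX s : X m) : E m) := congrArg Subtype.val sqv
  have ckk : pm s k k = -((eX s : X m) : E m) := congrArg Subtype.val sqk
  have cuv : pm s u v = (k : E m) := rfl
  have cvu : pm s v u = -(k : E m) := congrArg Subtype.val hvu
  have cuk : pm s u k = -(v : E m) := congrArg Subtype.val huk
  have ckv : pm s k v = -(u : E m) := congrArg Subtype.val hkv'
  have cku : pm s k u = (v : E m) := congrArg Subtype.val hku'
  have cvk : pm s v k = (u : E m) := congrArg Subtype.val hvk'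
  intro i j
  fin_cases i <;> fin_cases j <;>
    simp only [Matrix.cons_val_zero, Matrix.cons_val_one, Matrix.head_cons,
      Matrix.cons_val_two, Matrix.tail_cons, Matrix.cons_val_three, Fin.isValue,
      quatT, Fin.sum_univ_four, Matrix.cons_val] <;>
    simp <;>
    first
      | exact e1 _ | exact e2 _
      | exact cuu | exact cvv | exact ckk | exact cuv | exact cvu
      | exact cuk | exact ckv | exact cku | exact cvk


/-- the complex multiplication table -/
def cplxT : Fin 2 → Fin 2 → Fin 2 → ℝ :=
  ![![![1,0], ![0,1]], ![![0,1], ![-1,0]]]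

lemma orthonormal_eu (u : X m)
    (hue : ⟪(u : E m), ((eX s : X m) : E m)⟫ = 0) :
    Orthonormal ℝ ![((eX s : X m) : E m), (u : E m)] := by
  rw [orthonormal_iff_ite]
  intro i j
  have heu : ⟪((eX s : X m) : E m), (u : E m)⟫ = 0 := by rw [real_inner_comm]; exact hue
  fin_cases i <;> fin_cases j <;>
    simp only [Matrix.cons_val_zero, Matrix.cons_val_one, Matrix.head_cons, Fin.isValue] <;>
    norm_num <;>
    first
      | exact inner_self _ | exact hue | exact heu

lemma table2 (hs : Compatible (X m) s) (u : X m)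
    (hue : ⟪(u : E m), ((eX s : X m) : E m)⟫ = 0) :
    ∀ i j, pm s (![eX s, u] i) (![eX s, u] j)
      = ∑ k, cplxT i j k • ((![eX s, u] k : X m) : E m) := by
  have e1 : ∀ x : X m, pm s (eX s) x = (x : E m) := fun x => congrArg Subtype.val (one_mulX s x)
  have e2 : ∀ x : X m, pm s x (eX s) = (x : E m) := fun x => congrArg Subtype.val (mul_oneX s x)
  have cuu : pm s u u = -((eX s : X m) : E m) := sq_imaginary s hs u hue
  intro i j
  fin_cases i <;> fin_cases j <;>
    simp only [Matrix.cons_val_zero, Matrix.cons_val_one, Matrix.head_cons, Fin.isValue,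
      cplxT, Fin.sum_univ_two] <;>
    norm_num <;>
    first
      | exact e1 _ | exact e2 _ | exact cuu

lemma orthonormal_e : Orthonormal ℝ ![((eX s : X m) : E m)] := by
  rw [orthonormal_iff_ite]
  intro i j
  fin_cases i <;> fin_cases j <;> simp only [Matrix.cons_val_zero] <;> norm_num <;>
    exact inner_self _

lemma table1 (hs : Compatible (X m) s) :
    ∀ i j : Fin 1, pm s (![eX s] i) (![eX s] j)
      = ∑ k, (1:ℝ) • ((![eX s] k : X m) : E m) := by
  intro i j
  fin_cases i <;> fin_cases j <;>
    simp only [Matrix.cons_val_zero, Fin.sum_univ_one, one_smul]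
  exact congrArg Subtype.val (one_mulX s (eX s))

end Tables

section Unique

theorem unique_dim1 (s t : Group (X 1)) (hs : Compatible (X 1) s) (ht : Compatible (X 1) t) :
    GroupStructIso s t := by
  refine iso_of_table (by norm_num) s t hs ht ![eX s] ![eX t] ?_ ?_ (fun _ _ _ => 1) ?_ ?_
  · have := orthonormal_e (m := 1) s
    convert this using 1
    funext i
    fin_cases i <;> rfl
  · have := orthonormal_e (m := 1) t
    convert this using 1
    funext i
    fin_cases i <;> rfl
  · exact table1 s hs
  · exact table1 t ht

theorem unique_dim2 (s t : Group (X 2)) (hs : Compatible (X 2) s) (ht : Compatible (X 2) t) :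
    GroupStructIso s t := by
  obtain ⟨us, hus⟩ := exists_unit_orthogonal (m := 2) ![((eX s : X 2) : E 2)] (by norm_num)
  obtain ⟨ut, hut⟩ := exists_unit_orthogonal (m := 2) ![((eX t : X 2) : E 2)] (by norm_num)
  have hus0 : ⟪(us : E 2), ((eX s : X 2) : E 2)⟫ = 0 := by simpa using hus 0
  have hut0 : ⟪(ut : E 2), ((eX t : X 2) : E 2)⟫ = 0 := by simpa using hut 0
  refine iso_of_table (by norm_num) s t hs ht ![eX s, us] ![eX t, ut] ?_ ?_ cplxT
    (table2 s hs us hus0) (table2 t ht ut hut0)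
  · have := orthonormal_eu (m := 2) s us hus0
    convert this using 1
    funext i
    fin_cases i <;> rfl
  · have := orthonormal_eu (m := 2) t ut hut0
    convert this using 1
    funext i
    fin_cases i <;> rfl

theorem unique_dim4 (s t : Group (X 4)) (hs : Compatible (X 4) s) (ht : Compatible (X 4) t) :
    GroupStructIso s t := by
  obtain ⟨us, vs, hus, hvs, huvs⟩ := exists_uv (m := 4) s (by norm_num)
  obtain ⟨ut, vt, hut, hvt, huvt⟩ := exists_uv (m := 4) t (by norm_num)
  refine iso_of_table (by norm_num) s t hs ht
    ![eX s, us, vs, s.mul us vs] ![eX t, ut, vt, t.mul ut vt] ?_ ?_ quatT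
    (table4 s hs us vs hus hvs huvs) (table4 t ht ut vt hut hvt huvt)
  · have := orthonormal_euvk (m := 4) s hs us vs hus hvs huvs
    convert this using 1
    funext i
    fin_cases i <;> rfl
  · have := orthonormal_euvk (m := 4) t ht ut vt hut hvt huvt
    convert this using 1
    funext i
    fin_cases i <;> rfl

end Unique


section Exist

lemma sum_sq_eq_one (x : X m) : ∑ i, (x : E m) i ^ 2 = 1 := by
  have h := norm_coe x
  rw [EuclideanSpace.norm_eq, Real.sqrt_eq_one] at h
  rw [← h]
  refine Finset.sum_congr rfl fun i _ => ?_
  rw [Real.norm_eq_abs, sq_abs]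

lemma mem_sphere_of_sum_sq {z : E m} (h : ∑ i, z i ^ 2 = 1) :
    z ∈ Metric.sphere (0 : E m) 1 := by
  rw [mem_sphere_zero_iff_norm, EuclideanSpace.norm_eq, Real.sqrt_eq_one, ← h]
  refine Finset.sum_congr rfl fun i _ => ?_
  rw [Real.norm_eq_abs, sq_abs]

lemma dist_formula (x y : X m) :
    dist x y = Real.sqrt (∑ i, ((x : E m) i - (y : E m) i) ^ 2) := by
  rw [Subtype.dist_eq, EuclideanSpace.dist_eq]
  congr 1
  refine Finset.sum_congr rfl fun i _ => ?_
  rw [Real.dist_eq, sq_abs]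

-- ## dimension 1
def mul1 (x y : X 1) : X 1 :=
  ⟨WithLp.toLp 2 ![(x : E 1) 0 * (y : E 1) 0], by
    apply mem_sphere_of_sum_sq
    have hx := sum_sq_eq_one x
    have hy := sum_sq_eq_one y
    rw [Fin.sum_univ_one] at hx hy ⊢
    show ((x : E 1) 0 * (y : E 1) 0) ^ 2 = 1
    nlinarith [hx, hy]⟩

def one1 : X 1 :=
  ⟨WithLp.toLp 2 ![1], by apply mem_sphere_of_sum_sq; rw [Fin.sum_univ_one]; norm_num⟩

lemma ext1 {x y : X 1} (h : (x : E 1) 0 = (y : E 1) 0) : x = y := by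
  apply Subtype.ext
  ext i
  fin_cases i
  exact h

def grp1 : Group (X 1) :=
  letI : Mul (X 1) := ⟨mul1⟩
  letI : One (X 1) := ⟨one1⟩
  letI : Inv (X 1) := ⟨id⟩
  Group.ofLeftAxioms
    (fun a b c => by
      apply ext1
      show (mul1 (mul1 a b) c : E 1) 0 = (mul1 a (mul1 b c) : E 1) 0
      show ((a : E 1) 0 * (b : E 1) 0) * (c : E 1) 0
        = (a : E 1) 0 * ((b : E 1) 0 * (c : E 1) 0)
      ring)
    (fun a => by
      apply ext1
      show (1 : ℝ) * (a : E 1) 0 = (a : E 1) 0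
      ring)
    (fun a => by
      apply ext1
      show (a : E 1) 0 * (a : E 1) 0 = (1 : ℝ)
      have := sum_sq_eq_one a
      rw [Fin.sum_univ_one] at this
      nlinarith [this])

lemma compat1 : Compatible (X 1) grp1 := by
  have hd : ∀ g x y : X 1, dist (mul1 g x) (mul1 g y) = dist x y := by
    intro g x y
    rw [dist_formula, dist_formula]
    congr 1
    rw [Fin.sum_univ_one, Fin.sum_univ_one]
    show (((g : E 1) 0 * (x : E 1) 0) - ((g : E 1) 0 * (y : E 1) 0)) ^ 2
      = ((x : E 1) 0 - (y : E 1) 0) ^ 2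
    have := sum_sq_eq_one g
    rw [Fin.sum_univ_one] at this
    nlinarith [this]
  have hd2 : ∀ g x y : X 1, dist (mul1 x g) (mul1 y g) = dist x y := by
    intro g x y
    rw [dist_formula, dist_formula]
    congr 1
    rw [Fin.sum_univ_one, Fin.sum_univ_one]
    show (((x : E 1) 0 * (g : E 1) 0) - ((y : E 1) 0 * (g : E 1) 0)) ^ 2
      = ((x : E 1) 0 - (y : E 1) 0) ^ 2
    have := sum_sq_eq_one g
    rw [Fin.sum_univ_one] at this
    nlinarith [this]
  exact ⟨hd, hd2, fun x y => rfl⟩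

-- ## dimension 2
def mul2 (x y : X 2) : X 2 :=
  ⟨WithLp.toLp 2 ![(x : E 2) 0 * (y : E 2) 0 - (x : E 2) 1 * (y : E 2) 1,
     (x : E 2) 0 * (y : E 2) 1 + (x : E 2) 1 * (y : E 2) 0], by
    apply mem_sphere_of_sum_sq
    have hx := sum_sq_eq_one x
    have hy := sum_sq_eq_one y
    rw [Fin.sum_univ_two] at hx hy ⊢
    show ((x : E 2) 0 * (y : E 2) 0 - (x : E 2) 1 * (y : E 2) 1) ^ 2
      + ((x : E 2) 0 * (y : E 2) 1 + (x : E 2) 1 * (y : E 2) 0) ^ 2 = 1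
    nlinarith [hx, hy]⟩

def one2 : X 2 :=
  ⟨WithLp.toLp 2 ![1, 0], by apply mem_sphere_of_sum_sq; rw [Fin.sum_univ_two]; norm_num⟩

def inv2 (x : X 2) : X 2 :=
  ⟨WithLp.toLp 2 ![(x : E 2) 0, -(x : E 2) 1], by
    apply mem_sphere_of_sum_sq
    have hx := sum_sq_eq_one x
    rw [Fin.sum_univ_two] at hx ⊢
    show (x : E 2) 0 ^ 2 + (-(x : E 2) 1) ^ 2 = 1
    nlinarith [hx]⟩

lemma ext2 {x y : X 2} (h0 : (x : E 2) 0 = (y : E 2) 0) (h1 : (x : E 2) 1 = (y : E 2) 1) :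
    x = y := by
  apply Subtype.ext
  ext i
  fin_cases i
  · exact h0
  · exact h1

def grp2 : Group (X 2) :=
  letI : Mul (X 2) := ⟨mul2⟩
  letI : One (X 2) := ⟨one2⟩
  letI : Inv (X 2) := ⟨inv2⟩
  Group.ofLeftAxioms
    (fun a b c => by
      refine ext2 ?_ ?_
      · show (((a : E 2) 0 * (b : E 2) 0 - (a : E 2) 1 * (b : E 2) 1) * (c : E 2) 0 - ((a : E 2) 0 * (b : E 2) 1 + (a : E 2) 1 * (b : E 2) 0) * (c : E 2) 1) = ((a : E 2) 0 * ((b : E 2) 0 * (c : E 2) 0 - (b : E 2) 1 * (c : E 2) 1) - (a : E 2) 1 * ((b : E 2) 0 * (c : E 2) 1 + (b : E 2) 1 * (c : E 2) 0))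
        ring
      · show (((a : E 2) 0 * (b : E 2) 0 - (a : E 2) 1 * (b : E 2) 1) * (c : E 2) 1 + ((a : E 2) 0 * (b : E 2) 1 + (a : E 2) 1 * (b : E 2) 0) * (c : E 2) 0) = ((a : E 2) 0 * ((b : E 2) 0 * (c : E 2) 1 + (b : E 2) 1 * (c : E 2) 0) + (a : E 2) 1 * ((b : E 2) 0 * (c : E 2) 0 - (b : E 2) 1 * (c : E 2) 1))
        ring)
    (fun a => by
      refine ext2 ?_ ?_
      · show (1:ℝ) * (a : E 2) 0 - 0 * (a : E 2) 1 = (a : E 2) 0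
        ring
      · show (1:ℝ) * (a : E 2) 1 + 0 * (a : E 2) 0 = (a : E 2) 1
        ring)
    (fun a => by
      have ha := sum_sq_eq_one a
      rw [Fin.sum_univ_two] at ha
      refine ext2 ?_ ?_
      · show (a : E 2) 0 * (a : E 2) 0 - -(a : E 2) 1 * (a : E 2) 1 = (1:ℝ)
        nlinarith [ha]
      · show (a : E 2) 0 * (a : E 2) 1 + -(a : E 2) 1 * (a : E 2) 0 = (0:ℝ)
        ring)

lemma compat2 : Compatible (X 2) grp2 := by
  refine ⟨?_, ?_, ?_⟩
  · intro g x y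
    rw [dist_formula, dist_formula]
    congr 1
    rw [Fin.sum_univ_two, Fin.sum_univ_two]
    have hg := sum_sq_eq_one g
    rw [Fin.sum_univ_two] at hg
    show ((g : E 2) 0 * (x : E 2) 0 - (g : E 2) 1 * (x : E 2) 1
        - ((g : E 2) 0 * (y : E 2) 0 - (g : E 2) 1 * (y : E 2) 1)) ^ 2
      + ((g : E 2) 0 * (x : E 2) 1 + (g : E 2) 1 * (x : E 2) 0
        - ((g : E 2) 0 * (y : E 2) 1 + (g : E 2) 1 * (y : E 2) 0)) ^ 2
      = ((x : E 2) 0 - (y : E 2) 0) ^ 2 + ((x : E 2) 1 - (y : E 2) 1) ^ 2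
    nlinarith [hg]
  · intro g x y
    rw [dist_formula, dist_formula]
    congr 1
    rw [Fin.sum_univ_two, Fin.sum_univ_two]
    have hg := sum_sq_eq_one g
    rw [Fin.sum_univ_two] at hg
    show ((x : E 2) 0 * (g : E 2) 0 - (x : E 2) 1 * (g : E 2) 1
        - ((y : E 2) 0 * (g : E 2) 0 - (y : E 2) 1 * (g : E 2) 1)) ^ 2
      + ((x : E 2) 0 * (g : E 2) 1 + (x : E 2) 1 * (g : E 2) 0
        - ((y : E 2) 0 * (g : E 2) 1 + (y : E 2) 1 * (g : E 2) 0)) ^ 2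
      = ((x : E 2) 0 - (y : E 2) 0) ^ 2 + ((x : E 2) 1 - (y : E 2) 1) ^ 2
    nlinarith [hg]
  · intro x y
    rw [dist_formula, dist_formula]
    congr 1
    rw [Fin.sum_univ_two, Fin.sum_univ_two]
    show ((x : E 2) 0 - (y : E 2) 0) ^ 2 + (-(x : E 2) 1 - -(y : E 2) 1) ^ 2
      = ((x : E 2) 0 - (y : E 2) 0) ^ 2 + ((x : E 2) 1 - (y : E 2) 1) ^ 2
    ring

-- ## dimension 4
def mul4 (x y : X 4) : X 4 :=
  ⟨WithLp.toLp 2 ![((x : E 4) 0*(y : E 4) 0 - (x : E 4) 1*(y : E 4) 1 - (x : E 4) 2*(y : E 4) 2 - (x : E 4) 3*(y : E 4) 3),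
     ((x : E 4) 0*(y : E 4) 1 + (x : E 4) 1*(y : E 4) 0 + (x : E 4) 2*(y : E 4) 3 - (x : E 4) 3*(y : E 4) 2),
     ((x : E 4) 0*(y : E 4) 2 - (x : E 4) 1*(y : E 4) 3 + (x : E 4) 2*(y : E 4) 0 + (x : E 4) 3*(y : E 4) 1),
     ((x : E 4) 0*(y : E 4) 3 + (x : E 4) 1*(y : E 4) 2 - (x : E 4) 2*(y : E 4) 1 + (x : E 4) 3*(y : E 4) 0)], by
    apply mem_sphere_of_sum_sq
    have hx := sum_sq_eq_one x
    have hy := sum_sq_eq_one y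
    rw [Fin.sum_univ_four] at hx hy ⊢
    show ((x : E 4) 0*(y : E 4) 0 - (x : E 4) 1*(y : E 4) 1 - (x : E 4) 2*(y : E 4) 2 - (x : E 4) 3*(y : E 4) 3) ^ 2 + ((x : E 4) 0*(y : E 4) 1 + (x : E 4) 1*(y : E 4) 0 + (x : E 4) 2*(y : E 4) 3 - (x : E 4) 3*(y : E 4) 2) ^ 2 + ((x : E 4) 0*(y : E 4) 2 - (x : E 4) 1*(y : E 4) 3 + (x : E 4) 2*(y : E 4) 0 + (x : E 4) 3*(y : E 4) 1) ^ 2 + ((x : E 4) 0*(y : E 4) 3 + (x : E 4) 1*(y : E 4) 2 - (x : E 4) 2*(y : E 4) 1 + (x : E 4) 3*(y : E 4) 0) ^ 2 = 1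
    calc ((x : E 4) 0*(y : E 4) 0 - (x : E 4) 1*(y : E 4) 1 - (x : E 4) 2*(y : E 4) 2 - (x : E 4) 3*(y : E 4) 3) ^ 2 + ((x : E 4) 0*(y : E 4) 1 + (x : E 4) 1*(y : E 4) 0 + (x : E 4) 2*(y : E 4) 3 - (x : E 4) 3*(y : E 4) 2) ^ 2 + ((x : E 4) 0*(y : E 4) 2 - (x : E 4) 1*(y : E 4) 3 + (x : E 4) 2*(y : E 4) 0 + (x : E 4) 3*(y : E 4) 1) ^ 2 + ((x : E 4) 0*(y : E 4) 3 + (x : E 4) 1*(y : E 4) 2 - (x : E 4) 2*(y : E 4) 1 + (x : E 4) 3*(y : E 4) 0) ^ 2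
        = ((x : E 4) 0^2 + (x : E 4) 1^2 + (x : E 4) 2^2 + (x : E 4) 3^2) * ((y : E 4) 0^2 + (y : E 4) 1^2 + (y : E 4) 2^2 + (y : E 4) 3^2) := by ring
      _ = 1 := by rw [hx, hy]; norm_num⟩

def one4 : X 4 :=
  ⟨WithLp.toLp 2 ![1, 0, 0, 0], by apply mem_sphere_of_sum_sq; rw [Fin.sum_univ_four]; simp⟩

def inv4 (x : X 4) : X 4 :=
  ⟨WithLp.toLp 2 ![(x : E 4) 0, -(x : E 4) 1, -(x : E 4) 2, -(x : E 4) 3], by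
    apply mem_sphere_of_sum_sq
    have hx := sum_sq_eq_one x
    rw [Fin.sum_univ_four] at hx ⊢
    show (x : E 4) 0 ^ 2 + (-(x : E 4) 1) ^ 2 + (-(x : E 4) 2) ^ 2 + (-(x : E 4) 3) ^ 2 = 1
    nlinarith [hx]⟩

lemma ext4 {x y : X 4} (h0 : (x : E 4) 0 = (y : E 4) 0) (h1 : (x : E 4) 1 = (y : E 4) 1)
    (h2 : (x : E 4) 2 = (y : E 4) 2) (h3 : (x : E 4) 3 = (y : E 4) 3) : x = y := by
  apply Subtype.ext
  ext i
  fin_cases i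
  · exact h0
  · exact h1
  · exact h2
  · exact h3

def grp4 : Group (X 4) :=
  letI : Mul (X 4) := ⟨mul4⟩
  letI : One (X 4) := ⟨one4⟩
  letI : Inv (X 4) := ⟨inv4⟩
  Group.ofLeftAxioms
    (fun a b c => by
      refine ext4 ?_ ?_ ?_ ?_
      · show (((a : E 4) 0*(b : E 4) 0 - (a : E 4) 1*(b : E 4) 1 - (a : E 4) 2*(b : E 4) 2 - (a : E 4) 3*(b : E 4) 3)*(c : E 4) 0 - ((a : E 4) 0*(b : E 4) 1 + (a : E 4) 1*(b : E 4) 0 + (a : E 4) 2*(b : E 4) 3 - (a : E 4) 3*(b : E 4) 2)*(c : E 4) 1 - ((a : E 4) 0*(b : E 4) 2 - (a : E 4) 1*(b : E 4) 3 + (a : E 4) 2*(b : E 4) 0 + (a : E 4) 3*(b : E 4) 1)*(c : E 4) 2 - ((a : E 4) 0*(b : E 4) 3 + (a : E 4) 1*(b : E 4) 2 - (a : E 4) 2*(b : E 4) 1 + (a : E 4) 3*(b : E 4) 0)*(c : E 4) 3) = ((a : E 4) 0*((b : E 4) 0*(c : E 4) 0 - (b : E 4) 1*(c : E 4) 1 -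 (b : E 4) 2*(c : E 4) 2 - (b : E 4) 3*(c : E 4) 3) - (a : E 4) 1*((b : E 4) 0*(c : E 4) 1 + (b : E 4) 1*(c : E 4) 0 + (b : E 4) 2*(c : E 4) 3 - (b : E 4) 3*(c : E 4) 2) - (a : E 4) 2*((b : E 4) 0*(c : E 4) 2 - (b : E 4) 1*(c : E 4) 3 + (b : E 4) 2*(c : E 4) 0 + (b : E 4) 3*(c : E 4) 1) - (a : E 4) 3*((b : E 4) 0*(c : E 4) 3 + (b : E 4) 1*(c : E 4) 2 - (b : E 4) 2*(c : E 4) 1 + (b : E 4) 3*(c : E 4) 0))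
        ring
      · show (((a : E 4) 0*(b : E 4) 0 - (a : E 4) 1*(b : E 4) 1 - (a : E 4) 2*(b : E 4) 2 - (a : E 4) 3*(b : E 4) 3)*(c : E 4) 1 + ((a : E 4) 0*(b : E 4) 1 + (a : E 4) 1*(b : E 4) 0 + (a : E 4) 2*(b : E 4) 3 - (a : E 4) 3*(b : E 4) 2)*(c : E 4) 0 + ((a : E 4) 0*(b : E 4) 2 - (a : E 4) 1*(b : E 4) 3 + (a : E 4) 2*(b : E 4) 0 + (a : E 4) 3*(b : E 4) 1)*(c : E 4) 3 - ((a : E 4) 0*(b : E 4) 3 + (a : E 4) 1*(b : E 4) 2 - (a : E 4) 2*(b : E 4) 1 + (a : E 4) 3*(b : E 4) 0)*(c : E 4) 2) = ((a : E 4) 0*((b : E 4) 0*(c : E 4) 1 + (b : E 4) 1*(c : E 4) 0 + (b : E 4) 2*(c : E 4) 3 - (b : E 4) 3*(c : E 4) 2) + (a : E 4) 1*((b : E 4) 0*(c : E 4) 0 - (b : E 4) 1*(c : E 4) 1 - (b : E 4) 2*(c : E 4) 2 - (b : E 4) 3*(c : E 4) 3) + (a : E 4) 2*((b : E 4) 0*(c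 : E 4) 3 + (b : E 4) 1*(c : E 4) 2 - (b : E 4) 2*(c : E 4) 1 + (b : E 4) 3*(c : E 4) 0) - (a : E 4) 3*((b : E 4) 0*(c : E 4) 2 - (b : E 4) 1*(c : E 4) 3 + (b : E 4) 2*(c : E 4) 0 + (b : E 4) 3*(c : E 4) 1))
        ring
      · show (((a : E 4) 0*(b : E 4) 0 - (a : E 4) 1*(b : E 4) 1 - (a : E 4) 2*(b : E 4) 2 - (a : E 4) 3*(b : E 4) 3)*(c : E 4) 2 - ((a : E 4) 0*(b : E 4) 1 + (a : E 4) 1*(b : E 4) 0 + (a : E 4) 2*(b : E 4) 3 - (a : E 4) 3*(b : E 4) 2)*(c : E 4) 3 + ((a : E 4) 0*(b : E 4) 2 - (a : E 4) 1*(b : E 4) 3 + (a : E 4) 2*(b : E 4) 0 + (a : E 4) 3*(b : E 4) 1)*(c : E 4) 0 + ((a : E 4) 0*(b : E 4) 3 + (a : E 4) 1*(b : E 4) 2 - (a : E 4) 2*(b : E 4) 1 + (a : E 4) 3*(b : E 4) 0)*(c : E 4) 1) = ((a : E 4) 0*((b : E 4) 0*(c : E 4) 2 - (b : E 4) 1*(c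 : E 4) 3 + (b : E 4) 2*(c : E 4) 0 + (b : E 4) 3*(c : E 4) 1) - (a : E 4) 1*((b : E 4) 0*(c : E 4) 3 + (b : E 4) 1*(c : E 4) 2 - (b : E 4) 2*(c : E 4) 1 + (b : E 4) 3*(c : E 4) 0) + (a : E 4) 2*((b : E 4) 0*(c : E 4) 0 - (b : E 4) 1*(c : E 4) 1 - (b : E 4) 2*(c : E 4) 2 - (b : E 4) 3*(c : E 4) 3) + (a : E 4) 3*((b : E 4) 0*(c : E 4) 1 + (b : E 4) 1*(c : E 4) 0 + (b : E 4) 2*(c : E 4) 3 - (b : E 4) 3*(c : E 4) 2))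
        ring
      · show (((a : E 4) 0*(b : E 4) 0 - (a : E 4) 1*(b : E 4) 1 - (a : E 4) 2*(b : E 4) 2 - (a : E 4) 3*(b : E 4) 3)*(c : E 4) 3 + ((a : E 4) 0*(b : E 4) 1 + (a : E 4) 1*(b : E 4) 0 + (a : E 4) 2*(b : E 4) 3 - (a : E 4) 3*(b : E 4) 2)*(c : E 4) 2 - ((a : E 4) 0*(b : E 4) 2 - (a : E 4) 1*(b : E 4) 3 + (a : E 4) 2*(b : E 4) 0 + (a : E 4) 3*(b : E 4) 1)*(c : E 4) 1 + ((a : E 4) 0*(b : E 4) 3 + (a : E 4) 1*(b : E 4) 2 - (a : E 4) 2*(b : E 4) 1 + (a : E 4) 3*(b : E 4) 0)*(c : E 4) 0) = ((a : E 4) 0*((b : E 4) 0*(c : E 4) 3 + (b : E 4) 1*(c : E 4) 2 - (b : E 4) 2*(c : E 4) 1 + (b : E 4) 3*(c : E 4) 0) + (a : E 4) 1*((b : E 4) 0*(c : E 4) 2 - (b : E 4) 1*(c : E 4) 3 + (b : E 4) 2*(c : E 4) 0 + (b : E 4) 3*(c : E 4) 1) - (a : E 4) 2*((b : E 4) 0*(c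 : E 4) 1 + (b : E 4) 1*(c : E 4) 0 + (b : E 4) 2*(c : E 4) 3 - (b : E 4) 3*(c : E 4) 2) + (a : E 4) 3*((b : E 4) 0*(c : E 4) 0 - (b : E 4) 1*(c : E 4) 1 - (b : E 4) 2*(c : E 4) 2 - (b : E 4) 3*(c : E 4) 3))
        ring)
    (fun a => by
      refine ext4 ?_ ?_ ?_ ?_
      · show (1:ℝ)*(a : E 4) 0 - 0*(a : E 4) 1 - 0*(a : E 4) 2 - 0*(a : E 4) 3 = (a : E 4) 0
        ring
      · show (1:ℝ)*(a : E 4) 1 + 0*(a : E 4) 0 + 0*(a : E 4) 3 - 0*(a : E 4) 2 = (a : E 4) 1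
        ring
      · show (1:ℝ)*(a : E 4) 2 - 0*(a : E 4) 3 + 0*(a : E 4) 0 + 0*(a : E 4) 1 = (a : E 4) 2
        ring
      · show (1:ℝ)*(a : E 4) 3 + 0*(a : E 4) 2 - 0*(a : E 4) 1 + 0*(a : E 4) 0 = (a : E 4) 3
        ring)
    (fun a => by
      have ha := sum_sq_eq_one a
      rw [Fin.sum_univ_four] at ha
      refine ext4 ?_ ?_ ?_ ?_
      · show ((a : E 4) 0*(a : E 4) 0 - -(a : E 4) 1*(a : E 4) 1 - -(a : E 4) 2*(a : E 4) 2 - -(a : E 4) 3*(a : E 4) 3) = (1:ℝ)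
        nlinarith [ha]
      · show ((a : E 4) 0*(a : E 4) 1 + -(a : E 4) 1*(a : E 4) 0 + -(a : E 4) 2*(a : E 4) 3 - -(a : E 4) 3*(a : E 4) 2) = (0:ℝ)
        ring
      · show ((a : E 4) 0*(a : E 4) 2 - -(a : E 4) 1*(a : E 4) 3 + -(a : E 4) 2*(a : E 4) 0 + -(a : E 4) 3*(a : E 4) 1) = (0:ℝ)
        ring
      · show ((a : E 4) 0*(a : E 4) 3 + -(a : E 4) 1*(a : E 4) 2 - -(a : E 4) 2*(a : E 4) 1 + -(a : E 4) 3*(a : E 4) 0) = (0:ℝ)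
        ring)

lemma compat4 : Compatible (X 4) grp4 := by
  refine ⟨?_, ?_, ?_⟩
  · intro g x y
    rw [dist_formula, dist_formula]
    congr 1
    rw [Fin.sum_univ_four, Fin.sum_univ_four]
    have hg := sum_sq_eq_one g
    rw [Fin.sum_univ_four] at hg
    show (((g : E 4) 0*(x : E 4) 0 - (g : E 4) 1*(x : E 4) 1 - (g : E 4) 2*(x : E 4) 2 - (g : E 4) 3*(x : E 4) 3) - ((g : E 4) 0*(y : E 4) 0 - (g : E 4) 1*(y : E 4) 1 - (g : E 4) 2*(y : E 4) 2 - (g : E 4) 3*(y : E 4) 3)) ^ 2 + (((g : E 4) 0*(x : E 4) 1 + (g : E 4) 1*(x : E 4) 0 + (g : E 4) 2*(x : E 4) 3 - (g : E 4) 3*(x : E 4) 2) - ((g : E 4) 0*(y : E 4) 1 + (g : E 4) 1*(y : E 4) 0 + (g : E 4) 2*(y : E 4) 3 - (g : E 4) 3*(y : E 4) 2)) ^ 2 + (((g : E 4) 0*(x : E 4) 2 - (g : E 4) 1*(x : E 4) 3 + (g : E 4) 2*(x : E 4) 0 + (g : E 4) 3*(x : E 4) 1) - ((g : E 4) 0*(y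 : E 4) 2 - (g : E 4) 1*(y : E 4) 3 + (g : E 4) 2*(y : E 4) 0 + (g : E 4) 3*(y : E 4) 1)) ^ 2 + (((g : E 4) 0*(x : E 4) 3 + (g : E 4) 1*(x : E 4) 2 - (g : E 4) 2*(x : E 4) 1 + (g : E 4) 3*(x : E 4) 0) - ((g : E 4) 0*(y : E 4) 3 + (g : E 4) 1*(y : E 4) 2 - (g : E 4) 2*(y : E 4) 1 + (g : E 4) 3*(y : E 4) 0)) ^ 2
      = ((x : E 4) 0 - (y : E 4) 0) ^ 2 + ((x : E 4) 1 - (y : E 4) 1) ^ 2 + ((x : E 4) 2 - (y : E 4) 2) ^ 2 + ((x : E 4) 3 - (y : E 4) 3) ^ 2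
    calc (((g : E 4) 0*(x : E 4) 0 - (g : E 4) 1*(x : E 4) 1 - (g : E 4) 2*(x : E 4) 2 - (g : E 4) 3*(x : E 4) 3) - ((g : E 4) 0*(y : E 4) 0 - (g : E 4) 1*(y : E 4) 1 - (g : E 4) 2*(y : E 4) 2 - (g : E 4) 3*(y : E 4) 3)) ^ 2 + (((g : E 4) 0*(x : E 4) 1 + (g : E 4) 1*(x : E 4) 0 + (g : E 4) 2*(x : E 4) 3 - (g : E 4) 3*(x : E 4) 2) - ((g : E 4) 0*(y : E 4) 1 + (g : E 4) 1*(y : E 4) 0 + (g : E 4) 2*(y : E 4) 3 - (g : E 4) 3*(y : E 4) 2)) ^ 2 + (((g : E 4) 0*(x : E 4) 2 - (g : E 4) 1*(x : E 4) 3 + (g : E 4) 2*(x : E 4) 0 + (g : E 4) 3*(x : E 4) 1) - ((g : E 4) 0*(y : E 4) 2 - (g : E 4) 1*(y : E 4) 3 + (g : E 4) 2*(y : E 4) 0 + (g : E 4) 3*(y : E 4) 1)) ^ 2 + (((g : E 4) 0*(x : E 4) 3 + (g : E 4) 1*(x : E 4) 2 - (g : E 4) 2*(x : E 4) 1 + (g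 : E 4) 3*(x : E 4) 0) - ((g : E 4) 0*(y : E 4) 3 + (g : E 4) 1*(y : E 4) 2 - (g : E 4) 2*(y : E 4) 1 + (g : E 4) 3*(y : E 4) 0)) ^ 2
        = ((g : E 4) 0^2 + (g : E 4) 1^2 + (g : E 4) 2^2 + (g : E 4) 3^2) * (((x : E 4) 0 - (y : E 4) 0) ^ 2 + ((x : E 4) 1 - (y : E 4) 1) ^ 2 + ((x : E 4) 2 - (y : E 4) 2) ^ 2 + ((x : E 4) 3 - (y : E 4) 3) ^ 2) := by ring
      _ = ((x : E 4) 0 - (y : E 4) 0) ^ 2 + ((x : E 4) 1 - (y : E 4) 1) ^ 2 + ((x : E 4) 2 - (y : E 4) 2) ^ 2 + ((x : E 4) 3 - (y : E 4) 3) ^ 2 := by rw [hg]; ring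
  · intro g x y
    rw [dist_formula, dist_formula]
    congr 1
    rw [Fin.sum_univ_four, Fin.sum_univ_four]
    have hg := sum_sq_eq_one g
    rw [Fin.sum_univ_four] at hg
    show (((x : E 4) 0*(g : E 4) 0 - (x : E 4) 1*(g : E 4) 1 - (x : E 4) 2*(g : E 4) 2 - (x : E 4) 3*(g : E 4) 3) - ((y : E 4) 0*(g : E 4) 0 - (y : E 4) 1*(g : E 4) 1 - (y : E 4) 2*(g : E 4) 2 - (y : E 4) 3*(g : E 4) 3)) ^ 2 + (((x : E 4) 0*(g : E 4) 1 + (x : E 4) 1*(g : E 4) 0 + (x : E 4) 2*(g : E 4) 3 - (x : E 4) 3*(g : E 4) 2) - ((y : E 4) 0*(g : E 4) 1 + (y : E 4) 1*(g : E 4) 0 + (y : E 4) 2*(g : E 4) 3 - (y : E 4) 3*(g : E 4) 2)) ^ 2 + (((x : E 4) 0*(g : E 4) 2 - (x : E 4) 1*(g : E 4) 3 + (x : E 4) 2*(g : E 4) 0 + (x : E 4) 3*(g : E 4) 1) - ((y : E 4) 0*(g : E 4) 2 - (y : E 4) 1*(g : E 4) 3 + (y : E 4) 2*(g : E 4) 0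 + (y : E 4) 3*(g : E 4) 1)) ^ 2 + (((x : E 4) 0*(g : E 4) 3 + (x : E 4) 1*(g : E 4) 2 - (x : E 4) 2*(g : E 4) 1 + (x : E 4) 3*(g : E 4) 0) - ((y : E 4) 0*(g : E 4) 3 + (y : E 4) 1*(g : E 4) 2 - (y : E 4) 2*(g : E 4) 1 + (y : E 4) 3*(g : E 4) 0)) ^ 2
      = ((x : E 4) 0 - (y : E 4) 0) ^ 2 + ((x : E 4) 1 - (y : E 4) 1) ^ 2 + ((x : E 4) 2 - (y : E 4) 2) ^ 2 + ((x : E 4) 3 - (y : E 4) 3) ^ 2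
    calc (((x : E 4) 0*(g : E 4) 0 - (x : E 4) 1*(g : E 4) 1 - (x : E 4) 2*(g : E 4) 2 - (x : E 4) 3*(g : E 4) 3) - ((y : E 4) 0*(g : E 4) 0 - (y : E 4) 1*(g : E 4) 1 - (y : E 4) 2*(g : E 4) 2 - (y : E 4) 3*(g : E 4) 3)) ^ 2 + (((x : E 4) 0*(g : E 4) 1 + (x : E 4) 1*(g : E 4) 0 + (x : E 4) 2*(g : E 4) 3 - (x : E 4) 3*(g : E 4) 2) - ((y : E 4) 0*(g : E 4) 1 + (y : E 4) 1*(g : E 4) 0 + (y : E 4) 2*(g : E 4) 3 - (y : E 4) 3*(g : E 4) 2)) ^ 2 + (((x : E 4) 0*(g : E 4) 2 - (x : E 4) 1*(g : E 4) 3 + (x : E 4) 2*(g : E 4) 0 + (x : E 4) 3*(g : E 4) 1) - ((y : E 4) 0*(g : E 4) 2 - (y : E 4) 1*(g : E 4) 3 + (y : E 4) 2*(g : E 4) 0 + (y : E 4) 3*(g : E 4) 1)) ^ 2 + (((x : E 4) 0*(g : E 4) 3 + (x : E 4) 1*(g : E 4) 2 - (x : E 4) 2*(g : E 4) 1 + (x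 : E 4) 3*(g : E 4) 0) - ((y : E 4) 0*(g : E 4) 3 + (y : E 4) 1*(g : E 4) 2 - (y : E 4) 2*(g : E 4) 1 + (y : E 4) 3*(g : E 4) 0)) ^ 2
        = ((g : E 4) 0^2 + (g : E 4) 1^2 + (g : E 4) 2^2 + (g : E 4) 3^2) * (((x : E 4) 0 - (y : E 4) 0) ^ 2 + ((x : E 4) 1 - (y : E 4) 1) ^ 2 + ((x : E 4) 2 - (y : E 4) 2) ^ 2 + ((x : E 4) 3 - (y : E 4) 3) ^ 2) := by ring
      _ = ((x : E 4) 0 - (y : E 4) 0) ^ 2 + ((x : E 4) 1 - (y : E 4) 1) ^ 2 + ((x : E 4) 2 - (y : E 4) 2) ^ 2 + ((x : E 4) 3 - (y : E 4) 3) ^ 2 := by rw [hg]; ring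
  · intro x y
    rw [dist_formula, dist_formula]
    congr 1
    rw [Fin.sum_univ_four, Fin.sum_univ_four]
    show ((x : E 4) 0 - (y : E 4) 0) ^ 2 + (-(x : E 4) 1 - -(y : E 4) 1) ^ 2 + (-(x : E 4) 2 - -(y : E 4) 2) ^ 2
        + (-(x : E 4) 3 - -(y : E 4) 3) ^ 2
      = ((x : E 4) 0 - (y : E 4) 0) ^ 2 + ((x : E 4) 1 - (y : E 4) 1) ^ 2 + ((x : E 4) 2 - (y : E 4) 2) ^ 2 + ((x : E 4) 3 - (y : E 4) 3) ^ 2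
    ring

end Exist
end SphereNat


open SphereNat in
/-- The unit sphere Sⁿ ⊆ ℝ^(n+1), with the metric induced from the Euclidean metric, is a
natural metric space if and only if n = 0, n = 1 or n = 3. -/
theorem sphere_natural_iff (n : ℕ) :
    NaturalSpace (Metric.sphere (0 : EuclideanSpace ℝ (Fin (n + 1))) 1) ↔
      n = 0 ∨ n = 1 ∨ n = 3 := by
  constructor
  · intro h
    by_contra hn
    push_neg at hn
    obtain ⟨⟨s, hs⟩, -⟩ := h
    exact no_compatible (m := n + 1) s (by omega) hs
  · rintro (rfl | rfl | rfl)
    · exact ⟨⟨grp1, compat1⟩, fun s t hs ht => unique_dim1 s t hs ht⟩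
    · exact ⟨⟨grp2, compat2⟩, fun s t hs ht => unique_dim2 s t hs ht⟩
    · exact ⟨⟨grp4, compat4⟩, fun s t hs ht => unique_dim4 s t hs ht⟩
end
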